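/- Let G = (X,Y,A,B,V) be a two-player free game, let a : X → A be any function, let ε > 0, and let κ be an integer with 1 ≤ κ ≤ |X|. If S is a uniformly random κ-element subset of X, then with probability at least 1 − 2e^{−ε²κ}·|Y|·|B| over the choice of S, for every y ∈ Y and every b ∈ B we have |E_{x∈S}[V(x,y,a(x),b)] − E_{x∈X}[V(x,y,a(x),b)]| ≤ ε, where both expectations are over a uniformly random element of the indicated set. -/

import Mathlib

open Finset
open scoped Classical

/-- The value `ω(G)` of the two-player free game `G = (X,Y,A,B,V)`: the maximum
over deterministic strategies `a : X → A`, `b : Y → B` of the expected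
verification value for independent uniform questions. -/
noncomputable def gameVal {X Y A B : Type} [Fintype X] [Fintype Y]
    (V : X → Y → A → B → ℝ) : ℝ :=
  ⨆ a : X → A, ⨆ b : Y → B,
    (∑ x : X, ∑ y : Y, V x y (a x) (b y)) /
      ((Fintype.card X : ℝ) * (Fintype.card Y : ℝ))

/-- The value `ω(G_S)` of the subgame in which Merlin₁'s question is uniform over
`S ⊆ X` instead of `X`. -/
noncomputable def subGameVal {X Y A B : Type} [Fintype X] [Fintype Y]
    (V : X → Y → A → B → ℝ) (S : Finset X) : ℝ :=
  ⨆ a : X → A, ⨆ b : Y → B,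
    (∑ x ∈ S, ∑ y : Y, V x y (a x) (b y)) /
      ((S.card : ℝ) * (Fintype.card Y : ℝ))

section Aux
set_option linter.unusedSectionVars false
set_option maxHeartbeats 1000000

variable {α : Type*} [DecidableEq α]

noncomputable def esymR (g : α → ℝ) (F : Finset α) (k : ℕ) : ℝ :=
  ∑ S ∈ F.powersetCard k, ∏ x ∈ S, g x

lemma esymR_zero (g : α → ℝ) (F : Finset α) : esymR g F 0 = 1 := by
  simp [esymR]

lemma esymR_nonneg {g : α → ℝ} (hg : ∀ x, 0 ≤ g x) (F : Finset α) (k : ℕ) :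
    0 ≤ esymR g F k :=
  Finset.sum_nonneg fun S _ => Finset.prod_nonneg fun x _ => hg x

lemma esymR_rec {g : α → ℝ} {F : Finset α} {x : α} (hx : x ∈ F) (k : ℕ) :
    esymR g F (k+1) = esymR g (F.erase x) (k+1) + g x * esymR g (F.erase x) k := by
  have hxe : x ∉ F.erase x := notMem_erase x F
  have hF : F = insert x (F.erase x) := (insert_erase hx).symm
  have hdisj : Disjoint ((F.erase x).powersetCard (k+1))
      (((F.erase x).powersetCard k).image (insert x)) := by
    rw [Finset.disjoint_left]
    intro S hS hS'
    rcases Finset.mem_image.1 hS' with ⟨T, hT, rfl⟩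
    have hTx : x ∉ T := fun hxT => hxe ((mem_powersetCard.1 hT).1 hxT)
    have := (mem_powersetCard.1 hS).1 (mem_insert_self x T)
    exact hxe this
  calc esymR g F (k+1)
      = ∑ S ∈ ((F.erase x).powersetCard (k+1) ∪
          ((F.erase x).powersetCard k).image (insert x)), ∏ y ∈ S, g y := by
        rw [esymR]; conv_lhs => rw [hF]
        rw [powersetCard_succ_insert hxe]
    _ = esymR g (F.erase x) (k+1) +
        ∑ S ∈ ((F.erase x).powersetCard k).image (insert x), ∏ y ∈ S, g y := by
        rw [Finset.sum_union hdisj, esymR]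
    _ = esymR g (F.erase x) (k+1) + g x * esymR g (F.erase x) k := by
        congr 1
        rw [Finset.sum_image, esymR, Finset.mul_sum]
        · refine Finset.sum_congr rfl fun T hT => ?_
          have hTx : x ∉ T := fun hxT => hxe ((mem_powersetCard.1 hT).1 hxT)
          rw [Finset.prod_insert hTx]
        · intro T hT T' hT' hins
          have hTx : x ∉ T := fun hxT => hxe ((mem_powersetCard.1 hT).1 hxT)
          have hTx' : x ∉ T' := fun hxT => hxe ((mem_powersetCard.1 hT').1 hxT)
          have := congrArg (fun s => Finset.erase s x) hins
          simpa [Finset.erase_insert hTx, Finset.erase_insert hTx'] using this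

-- I1 : (k+1) * esymR g F (k+1) = ∑ x ∈ F, g x * esymR g (F.erase x) k
lemma esymR_I1 (g : α → ℝ) (F : Finset α) (k : ℕ) :
    ((k : ℝ) + 1) * esymR g F (k+1) = ∑ x ∈ F, g x * esymR g (F.erase x) k := by
  have step1 : ((k : ℝ) + 1) * esymR g F (k+1)
      = ∑ S ∈ F.powersetCard (k+1), ∑ x ∈ S, g x * ∏ y ∈ S.erase x, g y := by
    rw [esymR, Finset.mul_sum]
    refine Finset.sum_congr rfl fun S hS => ?_
    have hcard : S.card = k + 1 := (mem_powersetCard.1 hS).2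
    have : ∀ x ∈ S, g x * ∏ y ∈ S.erase x, g y = ∏ y ∈ S, g y := fun x hx =>
      Finset.mul_prod_erase S g hx
    rw [Finset.sum_congr rfl this, Finset.sum_const, hcard, nsmul_eq_mul]
    push_cast; ring
  rw [step1, ← Finset.sum_sigma (F.powersetCard (k+1)) (fun S => S)
    (fun p => g p.2 * ∏ y ∈ p.1.erase p.2, g y)]
  rw [show (∑ x ∈ F, g x * esymR g (F.erase x) k)
      = ∑ p ∈ F.sigma (fun x => (F.erase x).powersetCard k), g p.1 * ∏ y ∈ p.2, g y by
    rw [Finset.sum_sigma]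
    refine Finset.sum_congr rfl fun x hx => ?_
    rw [esymR, Finset.mul_sum]]
  refine Finset.sum_nbij' (fun p => ⟨p.2, p.1.erase p.2⟩) (fun p => ⟨insert p.1 p.2, p.1⟩)
    ?_ ?_ ?_ ?_ ?_
  · rintro ⟨S, x⟩ hp
    simp only [Finset.mem_sigma] at hp ⊢
    obtain ⟨hS, hxS⟩ := hp
    rcases mem_powersetCard.1 hS with ⟨hSF, hScard⟩
    refine ⟨hSF hxS, mem_powersetCard.2 ⟨fun y hy => ?_, ?_⟩⟩
    · rcases Finset.mem_erase.1 hy with ⟨hyx, hyS⟩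
      exact Finset.mem_erase.2 ⟨hyx, hSF hyS⟩
    · rw [Finset.card_erase_of_mem hxS, hScard]; rfl
  · rintro ⟨x, T⟩ hp
    simp only [Finset.mem_sigma] at hp ⊢
    obtain ⟨hxF, hT⟩ := hp
    rcases mem_powersetCard.1 hT with ⟨hTF, hTcard⟩
    have hxT : x ∉ T := fun h => notMem_erase x F (hTF h)
    refine ⟨mem_powersetCard.2 ⟨?_, ?_⟩, mem_insert_self x T⟩
    · intro y hy
      rcases Finset.mem_insert.1 hy with rfl | hyT
      · exact hxF
      · exact (Finset.erase_subset x F) (hTF hyT)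
    · rw [Finset.card_insert_of_notMem hxT, hTcard]
  · rintro ⟨S, x⟩ hp
    simp only [Finset.mem_sigma] at hp
    simp [Finset.insert_erase hp.2]
  · rintro ⟨x, T⟩ hp
    simp only [Finset.mem_sigma] at hp
    rcases mem_powersetCard.1 hp.2 with ⟨hTF, _⟩
    have hxT : x ∉ T := fun h => notMem_erase x F (hTF h)
    simp [Finset.erase_insert hxT]
  · rintro ⟨S, x⟩ hp
    rfl

lemma esymR_key {g : α → ℝ} {F : Finset α} {x y : α} (hx : x ∈ F) (hy : y ∈ F)
    (hxy : x ≠ y) (m : ℕ) :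
    g x * esymR g (F.erase x) m - g y * esymR g (F.erase y) m
      = (g x - g y) * esymR g ((F.erase x).erase y) m := by
  rcases m with _ | m
  · simp only [esymR_zero, mul_one]
  · have hyx : y ∈ F.erase x := Finset.mem_erase.2 ⟨hxy.symm, hy⟩
    have hxy' : x ∈ F.erase y := Finset.mem_erase.2 ⟨hxy, hx⟩
    rw [esymR_rec hyx m, esymR_rec hxy' m, show (F.erase y).erase x = (F.erase x).erase y from Finset.erase_right_comm]
    ring

lemma bsum {g h : α → ℝ} (F : Finset α)
    (hkey : ∀ x ∈ F, ∀ y ∈ F, 0 ≤ (g x - g y) * (g x * h x - g y * h y)) :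
    (∑ x ∈ F, g x * h x) * (∑ x ∈ F, g x) ≤ (F.card : ℝ) * ∑ x ∈ F, (g x)^2 * h x := by
  have hA : (0:ℝ) ≤ ∑ x ∈ F, ∑ y ∈ F, (g x - g y) * (g x * h x - g y * h y) :=
    Finset.sum_nonneg fun x hx => Finset.sum_nonneg fun y hy => hkey x hx y hy
  have hexp : ∑ x ∈ F, ∑ y ∈ F, (g x - g y) * (g x * h x - g y * h y)
      = 2 * ((F.card : ℝ) * ∑ x ∈ F, (g x)^2 * h x)
        - 2 * ((∑ x ∈ F, g x * h x) * (∑ x ∈ F, g x)) := by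
    have inner : ∀ x ∈ F, ∑ y ∈ F, (g x - g y) * (g x * h x - g y * h y)
        = (F.card : ℝ) * ((g x)^2 * h x) + (∑ y ∈ F, (g y)^2 * h y)
          - g x * (∑ y ∈ F, g y * h y) - (∑ y ∈ F, g y) * (g x * h x) := by
      intro x hx
      have : ∀ y ∈ F, (g x - g y) * (g x * h x - g y * h y)
          = (g x)^2 * h x + (g y)^2 * h y - g x * (g y * h y) - g y * (g x * h x) := by
        intro y hy; ring
      rw [Finset.sum_congr rfl this]
      rw [Finset.sum_sub_distrib, Finset.sum_sub_distrib, Finset.sum_add_distrib,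
        Finset.sum_const, ← Finset.mul_sum, ← Finset.sum_mul, nsmul_eq_mul]
    rw [Finset.sum_congr rfl inner]
    rw [Finset.sum_sub_distrib, Finset.sum_sub_distrib, Finset.sum_add_distrib,
      Finset.sum_const, nsmul_eq_mul]
    simp only [← Finset.sum_mul, ← Finset.mul_sum]
    ring
  rw [hexp] at hA; linarith

lemma maclaurinR {g : α → ℝ} (hg : ∀ x, 0 ≤ g x) (F : Finset α) (hF : F.Nonempty) (k : ℕ) :
    esymR g F k ≤ (F.card.choose k : ℝ) * ((∑ x ∈ F, g x) / (F.card : ℝ)) ^ k := by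
  set n := F.card with hn
  set T := ∑ x ∈ F, g x with hT
  have hn0 : (0:ℝ) < (n:ℝ) := by exact_mod_cast Finset.card_pos.2 hF
  have hT0 : 0 ≤ T := Finset.sum_nonneg fun x _ => hg x
  have hμ0 : 0 ≤ T / (n:ℝ) := div_nonneg hT0 hn0.le
  induction k with
  | zero => simp [esymR_zero]
  | succ k ih =>
    by_cases hk : k + 1 ≤ n
    case neg =>
      have : F.powersetCard (k+1) = ∅ :=
        Finset.powersetCard_eq_empty.2 (by omega)
      rw [esymR, this]
      simp only [Finset.sum_empty]
      positivity
    case pos =>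
      rcases k with _ | m
      · -- k+1 = 1
        have h1 : esymR g F 1 = T := by
          rw [esymR, Finset.powersetCard_one, Finset.sum_map]
          simp [hT]
        rw [h1, Nat.choose_one_right, pow_one]
        rw [mul_div_assoc']
        rw [mul_comm, mul_div_assoc, div_self hn0.ne', mul_one]
      · -- k+1 = m+2, ih : P (m+1)
        have ihm : esymR g F (m+1) ≤ (n.choose (m+1) : ℝ) * (T / n) ^ (m+1) := ih
        set E2 := esymR g F (m+2) with hE2
        set E1 := esymR g F (m+1) with hE1
        have hI1 : ((m:ℝ) + 1 + 1) * E2 = ∑ x ∈ F, g x * esymR g (F.erase x) (m+1) := by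
          have := esymR_I1 g F (m+1); push_cast at this ⊢; linarith [this]
        have hI1' : ((m:ℝ) + 1) * E1 = ∑ x ∈ F, g x * esymR g (F.erase x) m :=
          esymR_I1 g F m
        have hrec : ∀ x ∈ F, esymR g (F.erase x) (m+1)
            = E1 - g x * esymR g (F.erase x) m := by
          intro x hx; have := esymR_rec (g := g) hx m; rw [hE1, this]; ring
        have hsplit : ((m:ℝ) + 2) * E2
            = T * E1 - ∑ x ∈ F, (g x)^2 * esymR g (F.erase x) m := by
          have h1 : ∑ x ∈ F, g x * esymR g (F.erase x) (m+1)
              = ∑ x ∈ F, (g x * E1 - (g x)^2 * esymR g (F.erase x) m) := by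
            refine Finset.sum_congr rfl fun x hx => ?_
            rw [hrec x hx]; ring
          rw [show ((m:ℝ)+2) = ((m:ℝ)+1+1) by ring, hI1, h1, Finset.sum_sub_distrib,
            ← Finset.sum_mul]
        have hB : (∑ x ∈ F, g x * esymR g (F.erase x) m) * T
            ≤ (n:ℝ) * ∑ x ∈ F, (g x)^2 * esymR g (F.erase x) m := by
          refine bsum F ?_
          intro x hx y hy
          rcases eq_or_ne x y with rfl | hxy
          · simp
          · rw [esymR_key hx hy hxy m]
            have h2 : 0 ≤ esymR g ((F.erase x).erase y) m := esymR_nonneg hg _ m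
            nlinarith [sq_nonneg (g x - g y)]
        -- combine: n*(m+2)*E2 ≤ T*E1*(n-(m+1))
        have hcomb : (n:ℝ) * (((m:ℝ)+2) * E2) ≤ T * E1 * ((n:ℝ) - ((m:ℝ)+1)) := by
          rw [hsplit]
          have := hI1'
          nlinarith [hB, hI1']
        have hE1nn : 0 ≤ E1 := esymR_nonneg hg F (m+1)
        have hfac : 0 ≤ (n:ℝ) - ((m:ℝ)+1) := by
          have : (m+1 : ℕ) ≤ n := by omega
          have := Nat.cast_le (α := ℝ).2 this
          push_cast at this; linarith
        have hstep2 : T * E1 * ((n:ℝ) - ((m:ℝ)+1))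
            ≤ T * ((n.choose (m+1) : ℝ) * (T/n)^(m+1)) * ((n:ℝ) - ((m:ℝ)+1)) := by
          have := mul_le_mul_of_nonneg_left ihm hT0
          exact mul_le_mul_of_nonneg_right this hfac
        have hchoose : ((n.choose (m+2) : ℝ)) * ((m:ℝ)+2)
            = (n.choose (m+1) : ℝ) * ((n:ℝ) - ((m:ℝ)+1)) := by
          have h := Nat.choose_succ_right_eq n (m+1)
          have hcast := congrArg (Nat.cast : ℕ → ℝ) h
          push_cast [Nat.cast_sub (by omega : m+1 ≤ n)] at hcast
          convert hcast using 2 <;> push_cast <;> ring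
        have htarget : (n:ℝ) * (((m:ℝ)+2) * ((n.choose (m+2) : ℝ) * (T/n)^(m+2)))
            = T * ((n.choose (m+1) : ℝ) * (T/n)^(m+1)) * ((n:ℝ) - ((m:ℝ)+1)) := by
          rw [pow_succ]
          have hnT : (n:ℝ) * (T/n) = T := by
            rw [mul_div_assoc', mul_comm, mul_div_assoc, div_self hn0.ne', mul_one]
          linear_combination (T * (T/n)^(m+1)) * hchoose + (((m:ℝ)+2) * (n.choose (m+2) : ℝ) * (T/n)^(m+1)) * hnT
        have final : (n:ℝ) * (((m:ℝ)+2) * E2)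
            ≤ (n:ℝ) * (((m:ℝ)+2) * ((n.choose (m+2) : ℝ) * (T/n)^(m+2))) := by
          rw [htarget]; exact le_trans hcomb hstep2
        have hpos : (0:ℝ) < (n:ℝ) * ((m:ℝ)+2) := by positivity
        have := (mul_le_mul_iff_right₀ hpos).1 (by
          calc (n:ℝ) * ((m:ℝ)+2) * E2 = (n:ℝ) * (((m:ℝ)+2) * E2) := by ring
          _ ≤ (n:ℝ) * (((m:ℝ)+2) * ((n.choose (m+2) : ℝ) * (T/n)^(m+2))) := final
          _ = (n:ℝ) * ((m:ℝ)+2) * ((n.choose (m+2) : ℝ) * (T/n)^(m+2)) := by ring)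
        convert this using 2 <;> push_cast <;> ring

-- exp u ≤ 1 + u + u^2 for u ∈ [0,1]
lemma exp_le_quad {u : ℝ} (h0 : 0 ≤ u) (h1 : u ≤ 1) : Real.exp u ≤ 1 + u + u^2 := by
  have hb := Real.exp_bound (x := u) (by rw [abs_of_nonneg h0]; exact h1) (n := 2) (by norm_num)
  have : |Real.exp u - ∑ i ∈ Finset.range 2, u ^ i / i.factorial|
      ≤ |u| ^ 2 * ((2+1) / ((2:ℕ).factorial * 2)) := by exact_mod_cast hb
  rw [abs_of_nonneg h0] at this
  have hsum : ∑ i ∈ Finset.range 2, u ^ i / (i.factorial : ℝ) = 1 + u := by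
    simp [Finset.sum_range_succ]
  rw [hsum] at this
  have hfac : ((2:ℕ).factorial : ℝ) = 2 := by norm_num [Nat.factorial]
  rw [hfac] at this
  have h2 := (abs_le.1 this).2
  nlinarith [sq_nonneg u, h2]

-- pointwise derivative bound
lemma deriv_bound {p t : ℝ} (hp0 : 0 ≤ p) (hp1 : p ≤ 1) (ht : 0 ≤ t) :
    p * Real.exp t / (1 - p + p * Real.exp t) - p ≤ t / 2 := by
  have hexp : (0:ℝ) < Real.exp t := Real.exp_pos t
  have hD : (0:ℝ) < 1 - p + p * Real.exp t := by
    rcases lt_or_eq_of_le hp1 with h | rfl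
    · nlinarith [mul_nonneg hp0 hexp.le]
    · nlinarith
  have hkey : p * Real.exp t / (1 - p + p * Real.exp t) - p
      = p * (1 - p) * (Real.exp t - 1) / (1 - p + p * Real.exp t) := by
    field_simp; ring
  rw [hkey]
  have hnum : 0 ≤ p * (1 - p) * (Real.exp t - 1) :=
    mul_nonneg (mul_nonneg hp0 (by linarith)) (by linarith [Real.one_le_exp ht])
  by_cases ht2 : 2 ≤ t
  · -- large t : LHS ≤ 1 ≤ t/2
    have h1 : p * (1 - p) * (Real.exp t - 1) ≤ 1 - p + p * Real.exp t := by
      nlinarith [Real.one_le_exp ht]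
    calc p * (1 - p) * (Real.exp t - 1) / (1 - p + p * Real.exp t) ≤ 1 :=
          (div_le_one hD).2 h1
      _ ≤ t / 2 := by linarith
  · -- small t
    push_neg at ht2
    rcases eq_or_lt_of_le (mul_nonneg hp0 (by linarith : (0:ℝ) ≤ 1 - p)) with hpq | hpq
    · -- p(1-p) = 0
      rw [← hpq]
      simp only [zero_mul]
      rw [zero_div]
      linarith
    · set s := Real.sqrt (p * (1 - p)) with hs
      have hs0 : 0 < s := Real.sqrt_pos.2 hpq
      have hs2 : s ^ 2 = p * (1 - p) := Real.sq_sqrt (le_of_lt hpq)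
      have hsle : s ≤ 1/2 := by nlinarith [hs2, sq_nonneg (s - 1/2), sq_nonneg (p - 1/2)]
      set E := Real.exp (t/2) with hE
      have hE0 : 0 < E := Real.exp_pos _
      have hEE : E * E = Real.exp t := by rw [hE, ← Real.exp_add]; ring_nf
      -- AM-GM : 2 * s * E ≤ 1 - p + p * exp t
      have hAM : 2 * (s * E) ≤ 1 - p + p * Real.exp t := by
        have h2ab := two_mul_le_add_sq (Real.sqrt (1-p)) (Real.sqrt p * E)
        have ha : Real.sqrt (1-p) ^ 2 = 1 - p := Real.sq_sqrt (by linarith)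
        have hb : (Real.sqrt p * E) ^ 2 = p * Real.exp t := by
          rw [mul_pow, Real.sq_sqrt hp0, ← hEE]; ring
        have hab : Real.sqrt (1-p) * (Real.sqrt p * E) = s * E := by
          rw [hs, show p * (1-p) = (1-p) * p by ring, Real.sqrt_mul (by linarith)]
          ring
        nlinarith [h2ab, ha, hb, hab]
      have hAM0 : 0 < 2 * (s * E) := by positivity
      calc p * (1 - p) * (Real.exp t - 1) / (1 - p + p * Real.exp t)
          ≤ p * (1 - p) * (Real.exp t - 1) / (2 * (s * E)) :=
            div_le_div_of_nonneg_left hnum hAM0 hAM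
        _ = (s / 2) * (E - 1 / E) := by
            rw [← hEE, ← hs2]
            field_simp
        _ ≤ t / 2 := by
            have hu0 : 0 ≤ t/2 := by linarith
            have hu1 : t/2 ≤ 1 := by linarith
            have hinv : 1/E = Real.exp (-(t/2)) := by rw [hE, Real.exp_neg, one_div]
            have hup : E ≤ 1 + t/2 + (t/2)^2 := by rw [hE]; exact exp_le_quad hu0 hu1
            have hlow : 1 - t/2 ≤ 1/E := by
              rw [hinv]; linarith [Real.add_one_le_exp (-(t/2))]
            have hdiff : E - 1/E ≤ 3 * (t/2) := by
              nlinarith [hup, hlow, mul_nonneg hu0 (by linarith : (0:ℝ) ≤ 1 - t/2)]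
            have hEge1 : 1 ≤ E := by rw [hE]; exact Real.one_le_exp hu0
            have hinvle : 1/E ≤ 1 := by
              rw [hinv]
              calc Real.exp (-(t/2)) ≤ Real.exp 0 := Real.exp_le_exp.2 (by linarith)
                _ = 1 := Real.exp_zero
            have hEpos2 : 0 ≤ E - 1/E := by linarith
            nlinarith [hsle, hs0.le, hdiff, hEpos2,
              mul_nonneg (by linarith : (0:ℝ) ≤ 1/2 - s) hEpos2]

-- Hoeffding-type lemma with constant 1/4
lemma hoeffding_quarter {p : ℝ} (hp0 : 0 ≤ p) (hp1 : p ≤ 1) {l : ℝ} (hl : 0 ≤ l) :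
    1 - p + p * Real.exp l ≤ Real.exp (p * l + l^2 / 4) := by
  have hpos : ∀ t : ℝ, (0:ℝ) < 1 - p + p * Real.exp t := by
    intro t
    rcases lt_or_eq_of_le hp1 with h | rfl
    · nlinarith [mul_nonneg hp0 (Real.exp_pos t).le]
    · nlinarith [Real.exp_pos t]
  set φ : ℝ → ℝ := fun t => p * t + t^2/4 - Real.log (1 - p + p * Real.exp t) with hφ
  have hderiv : ∀ t : ℝ, HasDerivAt φ
      (p + t/2 - p * Real.exp t / (1 - p + p * Real.exp t)) t := by
    intro t
    have h1 : HasDerivAt (fun s : ℝ => 1 - p + p * Real.exp s) (p * Real.exp t) t := by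
      simpa using ((Real.hasDerivAt_exp t).const_mul p).const_add (1-p)
    have h2 : HasDerivAt (fun s : ℝ => Real.log (1 - p + p * Real.exp s))
        (p * Real.exp t / (1 - p + p * Real.exp t)) t := h1.log (hpos t).ne'
    have h3 : HasDerivAt (fun s : ℝ => p * s + s^2/4) (p + t/2) t := by
      have ha : HasDerivAt (fun s : ℝ => p * s) p t := by
        simpa using (hasDerivAt_id t).const_mul p
      have hb : HasDerivAt (fun s : ℝ => s^2/4) (t/2) t := by
        have h := (hasDerivAt_pow 2 t).div_const 4
        exact h.congr_deriv (by norm_num; ring)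
      exact ha.add hb
    exact h3.sub h2
  have hdiff : Differentiable ℝ φ := fun t => (hderiv t).differentiableAt
  have hmono : MonotoneOn φ (Set.Ici (0:ℝ)) := by
    refine monotoneOn_of_deriv_nonneg (convex_Ici 0) hdiff.continuous.continuousOn
      (hdiff.differentiableOn) ?_
    intro t ht
    rw [interior_Ici] at ht
    rw [(hderiv t).deriv]
    have := deriv_bound hp0 hp1 (le_of_lt ht)
    linarith
  have h0 : φ 0 = 0 := by
    simp [hφ, Real.exp_zero]
  have hl' : φ 0 ≤ φ l := hmono (Set.self_mem_Ici) (Set.mem_Ici.2 hl) hl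
  rw [h0] at hl'
  have : Real.log (1 - p + p * Real.exp l) ≤ p * l + l^2/4 := by
    simp only [hφ] at hl'; linarith
  calc 1 - p + p * Real.exp l
      = Real.exp (Real.log (1 - p + p * Real.exp l)) := (Real.exp_log (hpos l)).symm
    _ ≤ Real.exp (p * l + l^2/4) := Real.exp_le_exp.2 this

-- Chernoff upper-tail counting bound
lemma chernoff_count {X : Type} [Fintype X] [Nonempty X] (f : X → ℝ)
    (hf : ∀ x, f x ∈ Set.Icc (0:ℝ) 1) (ε : ℝ) (hε : 0 < ε) (κ : ℕ) :
    ((((univ : Finset X).powersetCard κ).filter fun S =>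
        (κ : ℝ) * ((∑ x, f x) / (Fintype.card X : ℝ) + ε) < ∑ x ∈ S, f x).card : ℝ)
      ≤ Real.exp (-(ε^2 * κ)) * ((Fintype.card X).choose κ : ℝ) := by
  classical
  set n := Fintype.card X with hn
  set T := ∑ x, f x with hT
  set μ := T / (n:ℝ) with hμ
  set l := 2 * ε with hl
  have hl0 : 0 < l := by positivity
  have hn0 : (0:ℝ) < (n:ℝ) := by
    have : 0 < n := Fintype.card_pos
    exact_mod_cast this
  have hT0 : 0 ≤ T := Finset.sum_nonneg fun x _ => (hf x).1
  have hT1 : T ≤ n := by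
    rw [hT, hn, ← Finset.card_univ]
    calc ∑ x, f x ≤ ∑ _x : X, (1:ℝ) := Finset.sum_le_sum fun x _ => (hf x).2
      _ = ((univ : Finset X).card : ℝ) := by simp
  have hμ0 : 0 ≤ μ := div_nonneg hT0 hn0.le
  have hμ1 : μ ≤ 1 := by rw [hμ]; exact (div_le_one hn0).2 hT1
  set P := (univ : Finset X).powersetCard κ with hP
  set Bad := P.filter fun S => (κ:ℝ) * (μ + ε) < ∑ x ∈ S, f x with hBad
  set g : X → ℝ := fun x => Real.exp (l * f x) with hg
  have hg0 : ∀ x, 0 ≤ g x := fun x => (Real.exp_pos _).le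
  -- step 1: per bad S
  have hstep1 : ∀ S ∈ Bad, Real.exp (l * ((κ:ℝ) * (μ + ε))) ≤ ∏ x ∈ S, g x := by
    intro S hS
    rcases Finset.mem_filter.1 hS with ⟨_, hSbig⟩
    rw [hg]
    rw [← Real.exp_sum]
    apply Real.exp_le_exp.2
    rw [← Finset.mul_sum]
    exact mul_le_mul_of_nonneg_left hSbig.le hl0.le
  -- step 2
  have hstep2 : (Bad.card : ℝ) * Real.exp (l * ((κ:ℝ) * (μ + ε)))
      ≤ esymR g (univ : Finset X) κ := by
    calc (Bad.card : ℝ) * Real.exp (l * ((κ:ℝ) * (μ + ε)))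
        = ∑ _S ∈ Bad, Real.exp (l * ((κ:ℝ) * (μ + ε))) := by
          rw [Finset.sum_const, nsmul_eq_mul]
      _ ≤ ∑ S ∈ Bad, ∏ x ∈ S, g x := Finset.sum_le_sum hstep1
      _ ≤ ∑ S ∈ P, ∏ x ∈ S, g x := by
          apply Finset.sum_le_sum_of_subset_of_nonneg (Finset.filter_subset _ _)
          intro S _ _
          exact Finset.prod_nonneg fun x _ => hg0 x
      _ = esymR g (univ : Finset X) κ := rfl
  -- step 3: Maclaurin
  have hmac : esymR g (univ : Finset X) κ
      ≤ (n.choose κ : ℝ) * ((∑ x, g x) / (n:ℝ)) ^ κ := by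
    have := maclaurinR hg0 (univ : Finset X) Finset.univ_nonempty κ
    simpa [hn, Finset.card_univ] using this
  -- step 4: chord bound
  have hchord : (∑ x, g x) / (n:ℝ) ≤ 1 - μ + μ * Real.exp l := by
    have hpt : ∀ x, g x ≤ 1 - f x + f x * Real.exp l := by
      intro x
      have hcv := convexOn_exp.2 (Set.mem_univ (0:ℝ)) (Set.mem_univ l)
        (by linarith [(hf x).2] : 0 ≤ 1 - f x) (hf x).1 (by ring)
      simp only [smul_eq_mul, mul_zero, Real.exp_zero, mul_one] at hcv
      rw [hg]
      calc Real.exp (l * f x) = Real.exp ((1 - f x) * 0 + f x * l) := by ring_nf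
        _ ≤ (1 - f x) * 1 + f x * Real.exp l := by simpa using hcv
        _ = 1 - f x + f x * Real.exp l := by ring
    have hsum : ∑ x, g x ≤ (n:ℝ) - T + T * Real.exp l := by
      calc ∑ x, g x ≤ ∑ x, (1 - f x + f x * Real.exp l) :=
            Finset.sum_le_sum fun x _ => hpt x
        _ = (n:ℝ) - T + T * Real.exp l := by
            rw [Finset.sum_add_distrib, Finset.sum_sub_distrib, Finset.sum_const,
              ← Finset.sum_mul]
            simp [hn, hT]
    rw [div_le_iff₀ hn0]
    calc ∑ x, g x ≤ (n:ℝ) - T + T * Real.exp l := hsum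
      _ = (1 - μ + μ * Real.exp l) * (n:ℝ) := by
        rw [hμ]; field_simp
  -- step 5: Hoeffding
  have hhoef : 1 - μ + μ * Real.exp l ≤ Real.exp (μ * l + l^2/4) :=
    hoeffding_quarter hμ0 hμ1 hl0.le
  -- combine
  have hbase0 : 0 ≤ (∑ x, g x) / (n:ℝ) :=
    div_nonneg (Finset.sum_nonneg fun x _ => hg0 x) hn0.le
  have hpow : ((∑ x, g x) / (n:ℝ)) ^ κ ≤ Real.exp ((κ:ℝ) * (μ * l + l^2/4)) := by
    calc ((∑ x, g x) / (n:ℝ)) ^ κ ≤ (Real.exp (μ * l + l^2/4)) ^ κ :=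
          pow_le_pow_left₀ hbase0 (le_trans hchord hhoef) κ
      _ = Real.exp ((κ:ℝ) * (μ * l + l^2/4)) := by
          rw [← Real.exp_nat_mul]
  have hfinal : (Bad.card : ℝ) * Real.exp (l * ((κ:ℝ) * (μ + ε)))
      ≤ (n.choose κ : ℝ) * Real.exp ((κ:ℝ) * (μ * l + l^2/4)) := by
    calc (Bad.card : ℝ) * Real.exp (l * ((κ:ℝ) * (μ + ε)))
        ≤ esymR g (univ : Finset X) κ := hstep2
      _ ≤ (n.choose κ : ℝ) * ((∑ x, g x) / (n:ℝ)) ^ κ := hmac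
      _ ≤ (n.choose κ : ℝ) * Real.exp ((κ:ℝ) * (μ * l + l^2/4)) := by
          exact mul_le_mul_of_nonneg_left hpow (Nat.cast_nonneg _)
  have hexp0 : (0:ℝ) < Real.exp (l * ((κ:ℝ) * (μ + ε))) := Real.exp_pos _
  have : (Bad.card : ℝ)
      ≤ (n.choose κ : ℝ) * Real.exp ((κ:ℝ) * (μ * l + l^2/4)) / Real.exp (l * ((κ:ℝ) * (μ + ε))) :=
    (le_div_iff₀ hexp0).2 hfinal
  calc (Bad.card : ℝ)
      ≤ (n.choose κ : ℝ) * Real.exp ((κ:ℝ) * (μ * l + l^2/4)) / Real.exp (l * ((κ:ℝ) * (μ + ε))) := this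
    _ = (n.choose κ : ℝ) * Real.exp ((κ:ℝ) * (μ * l + l^2/4) - l * ((κ:ℝ) * (μ + ε))) := by
        rw [Real.exp_sub]; ring
    _ = Real.exp (-(ε^2 * κ)) * (n.choose κ : ℝ) := by
        rw [mul_comm]
        congr 1
        congr 1
        rw [hl]; ring

lemma chernoff_count_lower {X : Type} [Fintype X] [Nonempty X] (f : X → ℝ)
    (hf : ∀ x, f x ∈ Set.Icc (0:ℝ) 1) (ε : ℝ) (hε : 0 < ε) (κ : ℕ) :
    ((((univ : Finset X).powersetCard κ).filter fun S =>
        ∑ x ∈ S, f x < (κ : ℝ) * ((∑ x, f x) / (Fintype.card X : ℝ) - ε)).card : ℝ)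
      ≤ Real.exp (-(ε^2 * κ)) * ((Fintype.card X).choose κ : ℝ) := by
  have hn0 : (0:ℝ) < (Fintype.card X : ℝ) := by
    have : 0 < Fintype.card X := Fintype.card_pos
    exact_mod_cast this
  have hbound := chernoff_count (fun x => 1 - f x)
    (fun x => ⟨by linarith [(hf x).2], by linarith [(hf x).1]⟩) ε hε κ
  have hfe : (((univ : Finset X).powersetCard κ).filter fun S =>
        ∑ x ∈ S, f x < (κ : ℝ) * ((∑ x, f x) / (Fintype.card X : ℝ) - ε))
      = (((univ : Finset X).powersetCard κ).filter fun S =>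
        (κ : ℝ) * ((∑ x, (1 - f x)) / (Fintype.card X : ℝ) + ε) < ∑ x ∈ S, (1 - f x)) := by
    apply Finset.filter_congr
    intro S hSP
    have hScard : S.card = κ := (Finset.mem_powersetCard.1 hSP).2
    have h1 : ∑ x ∈ S, (1 - f x) = (κ:ℝ) - ∑ x ∈ S, f x := by
      rw [Finset.sum_sub_distrib, Finset.sum_const, hScard, nsmul_eq_mul, mul_one]
    have h2 : ∑ x, (1 - f x) = (Fintype.card X : ℝ) - ∑ x, f x := by
      rw [Finset.sum_sub_distrib, Finset.sum_const, Finset.card_univ, nsmul_eq_mul, mul_one]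
    have h3 : (∑ x, (1 - f x)) / (Fintype.card X : ℝ)
        = 1 - (∑ x, f x) / (Fintype.card X : ℝ) := by
      rw [h2]; field_simp
    rw [h1, h3]
    constructor <;> intro h <;> nlinarith
  rw [hfe]
  exact hbound

lemma pair_bound {X : Type} [Fintype X] [Nonempty X] (f : X → ℝ)
    (hf : ∀ x, f x ∈ Set.Icc (0:ℝ) 1) (ε : ℝ) (hε : 0 < ε) (κ : ℕ) (hκ1 : 1 ≤ κ) :
    ((((univ : Finset X).powersetCard κ).filter fun S =>
        ¬ |(∑ x ∈ S, f x) / (S.card : ℝ) - (∑ x, f x) / (Fintype.card X : ℝ)| ≤ ε).card : ℝ)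
      ≤ 2 * Real.exp (-(ε^2 * κ)) * ((Fintype.card X).choose κ : ℝ) := by
  set T := ∑ x, f x with hT
  set μ := T / (Fintype.card X : ℝ) with hμ
  set P := (univ : Finset X).powersetCard κ with hP
  set U := P.filter fun S => (κ:ℝ) * (μ + ε) < ∑ x ∈ S, f x with hU
  set L := P.filter fun S => ∑ x ∈ S, f x < (κ:ℝ) * (μ - ε) with hL
  have hκ0 : (0:ℝ) < (κ:ℝ) := by exact_mod_cast hκ1
  have hsub : (P.filter fun S =>
      ¬ |(∑ x ∈ S, f x) / (S.card : ℝ) - μ| ≤ ε) ⊆ U ∪ L := by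
    intro S hS
    rcases Finset.mem_filter.1 hS with ⟨hSP, hSbad⟩
    have hScard : S.card = κ := (Finset.mem_powersetCard.1 hSP).2
    rw [Finset.mem_union]
    have habs := not_le.1 hSbad
    rcases lt_abs.1 habs with h | h
    · left
      refine Finset.mem_filter.2 ⟨hSP, ?_⟩
      rw [hScard] at h
      have h1 : μ + ε < (∑ x ∈ S, f x) / (κ:ℝ) := by linarith
      have := (lt_div_iff₀ hκ0).1 h1
      linarith
    · right
      refine Finset.mem_filter.2 ⟨hSP, ?_⟩
      rw [hScard] at h
      have h1 : (∑ x ∈ S, f x) / (κ:ℝ) < μ - ε := by linarith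
      have := (div_lt_iff₀ hκ0).1 h1
      linarith
  have hcard : ((P.filter fun S =>
      ¬ |(∑ x ∈ S, f x) / (S.card : ℝ) - μ| ≤ ε).card : ℝ) ≤ (U.card : ℝ) + (L.card : ℝ) := by
    have h1 := Finset.card_le_card hsub
    have h2 := Finset.card_union_le U L
    have := le_trans h1 h2
    exact_mod_cast this
  have hUb : (U.card : ℝ) ≤ Real.exp (-(ε^2 * κ)) * ((Fintype.card X).choose κ : ℝ) :=
    chernoff_count f hf ε hε κ
  have hLb : (L.card : ℝ) ≤ Real.exp (-(ε^2 * κ)) * ((Fintype.card X).choose κ : ℝ) :=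
    chernoff_count_lower f hf ε hε κ
  linarith

end Aux

/-- **Sampling concentration for free games.**  For any strategy `a : X → A` of
Merlin₁, with probability at least `1 − 2e^{−ε²κ}·|Y|·|B|` over a uniformly
random `κ`-subset `S ⊆ X`, the empirical average of `V(x,y,a(x),b)` over `x ∈ S`
is within `ε` of its average over all of `X`, simultaneously for every `y ∈ Y`
and `b ∈ B`. -/
theorem freegame_sampling_concentration (X Y A B : Type)
    [Fintype X] [Fintype Y] [Fintype A] [Fintype B]
    [Nonempty X] [Nonempty Y] [Nonempty A] [Nonempty B]
    (V : X → Y → A → B → ℝ) (hV : ∀ x y a b, V x y a b ∈ Set.Icc (0 : ℝ) 1)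
    (a : X → A) (ε : ℝ) (hε : 0 < ε) (κ : ℕ) (hκ1 : 1 ≤ κ) (hκ2 : κ ≤ Fintype.card X) :
    1 - 2 * Real.exp (-(ε ^ 2 * κ)) * (Fintype.card Y : ℝ) * (Fintype.card B : ℝ) ≤
      ((((univ : Finset X).powersetCard κ).filter fun S =>
          ∀ (y : Y) (b : B),
            |(∑ x ∈ S, V x y (a x) b) / (S.card : ℝ) -
                (∑ x : X, V x y (a x) b) / (Fintype.card X : ℝ)| ≤ ε).card : ℝ) /
        (((univ : Finset X).powersetCard κ).card : ℝ) := by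
  classical
  set P := (univ : Finset X).powersetCard κ with hP
  set pred : Finset X → Prop := fun S =>
    ∀ (y : Y) (b : B),
      |(∑ x ∈ S, V x y (a x) b) / (S.card : ℝ) -
          (∑ x : X, V x y (a x) b) / (Fintype.card X : ℝ)| ≤ ε with hpred
  have hNcard : P.card = (Fintype.card X).choose κ := by
    rw [hP, Finset.card_powersetCard, Finset.card_univ]
  have hN0 : (0:ℝ) < (P.card : ℝ) := by
    rw [hNcard]
    exact_mod_cast Nat.choose_pos hκ2
  set Bad := P.filter fun S => ¬ pred S with hBadDef
  have hsplit : (P.filter pred).card + Bad.card = P.card := by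
    rw [hBadDef]
    convert Finset.card_filter_add_card_filter_not (s := P) (p := pred) using 3
  -- union bound
  have hbadsub : Bad ⊆ (univ : Finset (Y × B)).biUnion fun p =>
      P.filter fun S =>
        ¬ |(∑ x ∈ S, V x p.1 (a x) p.2) / (S.card : ℝ) -
            (∑ x : X, V x p.1 (a x) p.2) / (Fintype.card X : ℝ)| ≤ ε := by
    intro S hS
    rcases Finset.mem_filter.1 hS with ⟨hSP, hSbad⟩
    rw [hpred] at hSbad
    rcases not_forall.1 hSbad with ⟨y, hy⟩
    rcases not_forall.1 hy with ⟨b, hb⟩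
    exact Finset.mem_biUnion.2 ⟨(y, b), Finset.mem_univ _,
      Finset.mem_filter.2 ⟨hSP, hb⟩⟩
  have hbadcard : (Bad.card : ℝ)
      ≤ 2 * Real.exp (-(ε^2 * κ)) * (Fintype.card Y : ℝ) * (Fintype.card B : ℝ) * (P.card : ℝ) := by
    have h1 : Bad.card ≤ ∑ p : Y × B, (P.filter fun S =>
        ¬ |(∑ x ∈ S, V x p.1 (a x) p.2) / (S.card : ℝ) -
            (∑ x : X, V x p.1 (a x) p.2) / (Fintype.card X : ℝ)| ≤ ε).card :=
      le_trans (Finset.card_le_card hbadsub) (Finset.card_biUnion_le)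
    have h2 : (Bad.card : ℝ) ≤ ∑ p : Y × B, ((P.filter fun S =>
        ¬ |(∑ x ∈ S, V x p.1 (a x) p.2) / (S.card : ℝ) -
            (∑ x : X, V x p.1 (a x) p.2) / (Fintype.card X : ℝ)| ≤ ε).card : ℝ) := by
      exact_mod_cast h1
    have h3 : ∀ p : Y × B, ((P.filter fun S =>
        ¬ |(∑ x ∈ S, V x p.1 (a x) p.2) / (S.card : ℝ) -
            (∑ x : X, V x p.1 (a x) p.2) / (Fintype.card X : ℝ)| ≤ ε).card : ℝ)
        ≤ 2 * Real.exp (-(ε^2 * κ)) * ((Fintype.card X).choose κ : ℝ) := by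
      intro p
      exact pair_bound (fun x => V x p.1 (a x) p.2) (fun x => hV x p.1 (a x) p.2) ε hε κ hκ1
    calc (Bad.card : ℝ) ≤ ∑ p : Y × B, ((P.filter fun S =>
          ¬ |(∑ x ∈ S, V x p.1 (a x) p.2) / (S.card : ℝ) -
              (∑ x : X, V x p.1 (a x) p.2) / (Fintype.card X : ℝ)| ≤ ε).card : ℝ) := h2
      _ ≤ ∑ _p : Y × B, 2 * Real.exp (-(ε^2 * κ)) * ((Fintype.card X).choose κ : ℝ) :=
          Finset.sum_le_sum fun p _ => h3 p
      _ = (Fintype.card (Y × B) : ℝ) * (2 * Real.exp (-(ε^2 * κ)) * ((Fintype.card X).choose κ : ℝ)) := by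
          rw [Finset.sum_const, Finset.card_univ, nsmul_eq_mul]
      _ = 2 * Real.exp (-(ε^2 * κ)) * (Fintype.card Y : ℝ) * (Fintype.card B : ℝ) * (P.card : ℝ) := by
          rw [Fintype.card_prod, hNcard]
          push_cast
          ring
  rw [le_div_iff₀ hN0]
  have hgood : ((P.filter pred).card : ℝ) = (P.card : ℝ) - (Bad.card : ℝ) := by
    have := hsplit
    push_cast [← this]
    ring
  rw [sub_mul, one_mul]
  have hε2 : (ε ^ 2 * κ) = (ε^2 * κ) := rfl
  rw [hgood]
  linarith [hbadcard]
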